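/- For the unit sphere S^n with the round metric of constant curvature 1 (intrinsic distance, diameter π), pack_{n+2}(S^n) equals half the common pairwise distance arccos(−1/(n+1)) of the vertices of a regular inscribed (n+1)-simplex; in particular for n = 1, pack_3(S¹) = π/3. -/

import Mathlib

open Metric

/-- Average pairwise distance of a `q`-tuple. -/
noncomputable def avgDist {X : Type*} [MetricSpace X] {q : ℕ} (x : Fin q → X) : ℝ :=
  (∑ i : Fin q, ∑ j : Fin q, if i < j then dist (x i) (x j) else 0) / (q.choose 2)

/-- The `q`-extent of a metric space: supremum of average pairwise distances. -/
noncomputable def extent (X : Type*) [MetricSpace X] (q : ℕ) : ℝ :=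
  sSup (Set.range (fun x : Fin q → X => avgDist x))

/-- Minimal pairwise distance of a `q`-tuple. -/
noncomputable def minPairDist {X : Type*} [MetricSpace X] {q : ℕ} (x : Fin q → X) : ℝ :=
  sInf {d : ℝ | ∃ i j : Fin q, i < j ∧ d = dist (x i) (x j)}

/-- The `q`-packing radius: `2 packRad q X` is the sup over `q`-tuples of the
minimal pairwise distance. -/
noncomputable def packRad (X : Type*) [MetricSpace X] (q : ℕ) : ℝ :=
  sSup (Set.range (fun x : Fin q → X => minPairDist x)) / 2

private lemma two_pi_pos' : (0:ℝ) < 2 * Real.pi := by positivity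

private lemma coe_toIcoMod' (x : ℝ) :
    ((toIcoMod two_pi_pos' 0 x : ℝ) : AddCircle (2*Real.pi)) = (x : AddCircle (2*Real.pi)) := by
  rw [QuotientAddGroup.eq_iff_sub_mem]
  exact ⟨-toIcoDiv two_pi_pos' 0 x, (toIcoMod_sub_self ..).symm⟩

private lemma norm_coe_le' (b : ℝ) : ‖((b:ℝ) : AddCircle (2*Real.pi))‖ ≤ |b| := by
  simpa using QuotientAddGroup.norm_mk_le_norm (S := AddSubgroup.zmultiples (2*Real.pi)) (m := b)

private lemma dist_coe' (a b : ℝ) :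
    dist ((a:ℝ) : AddCircle (2*Real.pi)) (b : AddCircle (2*Real.pi))
      = ‖(((a-b:ℝ)) : AddCircle (2*Real.pi))‖ := by
  rw [dist_eq_norm]; norm_cast

/-- every point has a representative in `[0, 2π)` -/
private lemma exists_rep (y : AddCircle (2*Real.pi)) :
    ∃ b : ℝ, 0 ≤ b ∧ b < 2*Real.pi ∧ (b : AddCircle (2*Real.pi)) = y := by
  induction y using QuotientAddGroup.induction_on with
  | H x =>
    refine ⟨toIcoMod two_pi_pos' 0 x, ?_, ?_, coe_toIcoMod' x⟩
    · simpa using (toIcoMod_mem_Ico two_pi_pos' 0 x).1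
    · simpa using (toIcoMod_mem_Ico two_pi_pos' 0 x).2

private lemma minPairDist_le {x : Fin 3 → AddCircle (2*Real.pi)} {i j : Fin 3} (hij : i < j) :
    minPairDist x ≤ dist (x i) (x j) := by
  apply csInf_le
  · exact ⟨0, by rintro d ⟨i, j, -, rfl⟩; exact dist_nonneg⟩
  · exact ⟨i, j, hij, rfl⟩

/-- upper bound -/
private lemma upper (x : Fin 3 → AddCircle (2*Real.pi)) : minPairDist x ≤ 2*Real.pi/3 := by
  obtain ⟨a, ha⟩ := QuotientAddGroup.mk_surjective (x 0)
  obtain ⟨b, hb0, hbL, hb⟩ := exists_rep (x 1 - (a : AddCircle (2*Real.pi)))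
  obtain ⟨c, hc0, hcL, hc⟩ := exists_rep (x 2 - (a : AddCircle (2*Real.pi)))
  have hx0 : x 0 = ((a : ℝ) : AddCircle (2*Real.pi)) := ha.symm
  have hx1 : x 1 = ((a + b : ℝ) : AddCircle (2*Real.pi)) := by
    have h' : ((a + b : ℝ) : AddCircle (2*Real.pi)) = ↑a + ↑b := by norm_cast
    rw [h', hb]; abel
  have hx2 : x 2 = ((a + c : ℝ) : AddCircle (2*Real.pi)) := by
    have h' : ((a + c : ℝ) : AddCircle (2*Real.pi)) = ↑a + ↑c := by norm_cast
    rw [h', hc]; abel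
  have h01 : minPairDist x ≤ dist (x 0) (x 1) := minPairDist_le (by decide)
  have h02 : minPairDist x ≤ dist (x 0) (x 2) := minPairDist_le (by decide)
  have h12 : minPairDist x ≤ dist (x 1) (x 2) := minPairDist_le (by decide)
  have d01 : dist (x 0) (x 1) = ‖((-b : ℝ) : AddCircle (2*Real.pi))‖ := by
    rw [hx0, hx1, dist_coe', show a - (a+b) = -b from by ring]
  have d02 : dist (x 0) (x 2) = ‖((-c : ℝ) : AddCircle (2*Real.pi))‖ := by
    rw [hx0, hx2, dist_coe', show a - (a+c) = -c from by ring]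
  have d12 : dist (x 1) (x 2) = ‖((b - c : ℝ) : AddCircle (2*Real.pi))‖ := by
    rw [hx1, hx2, dist_coe', show a + b - (a+c) = b - c from by ring]
  have e01 : dist (x 0) (x 1) ≤ b := by
    rw [d01]; calc _ ≤ |(-b : ℝ)| := norm_coe_le' _
    _ = b := by rw [abs_neg, abs_of_nonneg hb0]
  have e01' : dist (x 0) (x 1) ≤ 2*Real.pi - b := by
    rw [d01, ← AddCircle.coe_add_period (2*Real.pi) (-b)]
    calc _ ≤ |(-b + 2*Real.pi : ℝ)| := norm_coe_le' _
    _ = _ := by rw [abs_of_nonneg (by linarith)]; ring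
  have e02 : dist (x 0) (x 2) ≤ c := by
    rw [d02]; calc _ ≤ |(-c : ℝ)| := norm_coe_le' _
    _ = c := by rw [abs_neg, abs_of_nonneg hc0]
  have e02' : dist (x 0) (x 2) ≤ 2*Real.pi - c := by
    rw [d02, ← AddCircle.coe_add_period (2*Real.pi) (-c)]
    calc _ ≤ |(-c + 2*Real.pi : ℝ)| := norm_coe_le' _
    _ = _ := by rw [abs_of_nonneg (by linarith)]; ring
  have e12 : dist (x 1) (x 2) ≤ |b - c| := by rw [d12]; exact norm_coe_le' _
  rcases le_total b c with h | h
  · rw [abs_of_nonpos (by linarith)] at e12; linarith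
  · rw [abs_of_nonneg (by linarith)] at e12; linarith

private lemma norm_two_pi_third :
    ‖(((2*Real.pi/3 : ℝ)) : AddCircle (2*Real.pi))‖ = 2*Real.pi/3 := by
  have := Real.pi_pos
  rw [(AddCircle.norm_coe_eq_abs_iff (2*Real.pi) (by positivity)).mpr]
  · rw [abs_of_nonneg]; positivity
  · rw [abs_of_nonneg (by positivity), abs_of_nonneg (by positivity)]; linarith

/-- the regular triangle witness -/
private noncomputable def w : Fin 3 → AddCircle (2*Real.pi) :=
  ![((0:ℝ) : AddCircle (2*Real.pi)), ((2*Real.pi/3 : ℝ) : AddCircle (2*Real.pi)),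
    ((2*(2*Real.pi/3) : ℝ) : AddCircle (2*Real.pi))]

private lemma key (u v : ℝ) (h : u - v = -(2*Real.pi/3) ∨ u - v = -(2*(2*Real.pi/3))) :
    dist ((u:ℝ) : AddCircle (2*Real.pi)) ((v:ℝ) : AddCircle (2*Real.pi)) = 2*Real.pi/3 := by
  have := Real.pi_pos
  rw [dist_coe']
  rcases h with h | h
  · rw [h]
    have hn : ‖((-(2*Real.pi/3) : ℝ) : AddCircle (2*Real.pi))‖ = |(-(2*Real.pi/3) : ℝ)| :=
      (AddCircle.norm_coe_eq_abs_iff (2*Real.pi) (by positivity)).mpr (by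
        rw [abs_neg, abs_of_nonneg (by positivity : (0:ℝ) ≤ 2*Real.pi/3),
          abs_of_nonneg (by positivity : (0:ℝ) ≤ 2*Real.pi)]
        linarith)
    rw [hn, abs_neg, abs_of_nonneg (by positivity : (0:ℝ) ≤ 2*Real.pi/3)]
  · rw [h, ← AddCircle.coe_add_period (2*Real.pi) (-(2*(2*Real.pi/3))),
      show (-(2*(2*Real.pi/3)) + 2*Real.pi : ℝ) = 2*Real.pi/3 from by ring]
    exact norm_two_pi_third

private lemma w01 : dist (w 0) (w 1) = 2*Real.pi/3 := key _ _ (Or.inl (by ring))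
private lemma w02 : dist (w 0) (w 2) = 2*Real.pi/3 := key _ _ (Or.inr (by ring))
private lemma w12 : dist (w 1) (w 2) = 2*Real.pi/3 := key _ _ (Or.inl (by ring))

private lemma w_minPairDist : minPairDist w = 2*Real.pi/3 := by
  apply le_antisymm
  · have := minPairDist_le (x := w) (i := 0) (j := 1) (by decide)
    rwa [w01] at this
  · refine le_csInf ⟨dist (w 0) (w 1), ⟨0, 1, by decide, rfl⟩⟩ ?_
    rintro d ⟨i, j, hij, rfl⟩
    fin_cases i <;> fin_cases j <;>
      first
        | exact absurd hij (by decide)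
        | exact w01.ge
        | exact w02.ge
        | exact w12.ge

theorem packRad_three_circle :
    packRad (AddCircle (2 * Real.pi)) 3 = Real.arccos (-(1 / 2)) / 2 ∧
    packRad (AddCircle (2 * Real.pi)) 3 = Real.pi / 3 := by
  have harc : Real.arccos (-(1 / 2)) = 2 * Real.pi / 3 := by
    rw [Real.arccos_neg, show (1/2 : ℝ) = Real.cos (Real.pi/3) from Real.cos_pi_div_three.symm,
      Real.arccos_cos (by positivity) (by linarith [Real.pi_pos])]
    ring
  have hsup : sSup (Set.range (fun x : Fin 3 → AddCircle (2*Real.pi) => minPairDist x))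
      = 2*Real.pi/3 := by
    apply le_antisymm
    · exact csSup_le (Set.range_nonempty _) (by rintro d ⟨x, rfl⟩; exact upper x)
    · exact le_csSup ⟨2*Real.pi/3, by rintro d ⟨x, rfl⟩; exact upper x⟩ ⟨w, w_minPairDist⟩
  unfold packRad
  rw [hsup, harc]
  constructor <;> ring
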